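/- Let A ∈ ℝ^{3×3} be symmetric positive definite. The function V(R) := tr(A(I₃ - R)) on SO(3) satisfies V(R) ≥ 0 for all R ∈ SO(3), with V(R) = 0 if and only if R = I₃. -/

import Mathlib

open Matrix

/-- trace of a real PSD matrix is nonneg -/
lemma psd_trace_nonneg {n : ℕ} {P : Matrix (Fin n) (Fin n) ℝ} (hP : P.PosSemidef) :
    0 ≤ P.trace := by
  rw [Matrix.trace]
  refine Finset.sum_nonneg fun i _ => ?_
  have := hP.dotProduct_mulVec_nonneg (Pi.single i 1)
  simpa [Matrix.diag, dotProduct, Pi.single_apply, Matrix.mulVec] using this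

/-- a real PSD matrix with zero trace is zero -/
lemma psd_trace_eq_zero {n : ℕ} {P : Matrix (Fin n) (Fin n) ℝ} (hP : P.PosSemidef)
    (h : P.trace = 0) : P = 0 := by
  have hnn : ∀ i, 0 ≤ P.diag i := fun i => by
    have := hP.dotProduct_mulVec_nonneg (Pi.single i 1)
    simpa [Matrix.diag, dotProduct, Pi.single_apply, Matrix.mulVec] using this
  have hdiag : ∀ i, P.diag i = 0 := fun i =>
    (Finset.sum_eq_zero_iff_of_nonneg (fun i _ => hnn i)).mp h i (Finset.mem_univ i)
  ext i j
  have hcol : P *ᵥ Pi.single j 1 = 0 := by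
    refine (hP.dotProduct_mulVec_zero_iff (Pi.single j 1)).mp ?_
    have := hdiag j
    simp only [Matrix.diag] at this
    simpa [dotProduct, Pi.single_apply, Matrix.mulVec] using this
  have := congrFun hcol i
  simpa [Matrix.mulVec, dotProduct, Pi.single_apply] using this

theorem stmt15 (A : Matrix (Fin 3) (Fin 3) ℝ)
    (hA : A.PosDef) (hAsymm : Aᵀ = A)
    (R : Matrix (Fin 3) (Fin 3) ℝ) (hR : Rᵀ * R = 1) (hdet : R.det = 1) :
    0 ≤ (A * (1 - R)).trace ∧ ((A * (1 - R)).trace = 0 ↔ R = 1) := by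
  -- the symmetrized matrix
  set M : Matrix (Fin 3) (Fin 3) ℝ := 1 - (2:ℝ)⁻¹ • (R + Rᵀ) with hM_def
  -- M is positive semidefinite
  have hMherm : M.IsHermitian := by
    unfold Matrix.IsHermitian
    rw [Matrix.conjTranspose_eq_transpose_of_trivial]
    simp [hM_def, Matrix.transpose_add, Matrix.transpose_smul, add_comm]
  have hMpsd : M.PosSemidef := by
    refine Matrix.PosSemidef.of_dotProduct_mulVec_nonneg hMherm fun x => ?_
    have key : x ⬝ᵥ (M *ᵥ x) = (2:ℝ)⁻¹ * ((x - R *ᵥ x) ⬝ᵥ (x - R *ᵥ x)) := by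
      have hRx : (R *ᵥ x) ⬝ᵥ (R *ᵥ x) = x ⬝ᵥ x := by
        nth_rewrite 1 [← Matrix.vecMul_transpose]
        rw [← Matrix.dotProduct_mulVec, Matrix.mulVec_mulVec, hR, Matrix.one_mulVec]
      have hRtx : x ⬝ᵥ (Rᵀ *ᵥ x) = x ⬝ᵥ (R *ᵥ x) := by
        rw [Matrix.mulVec_transpose, Matrix.dotProduct_mulVec]
        exact _root_.dotProduct_comm _ _
      have hcomm : (R *ᵥ x) ⬝ᵥ x = x ⬝ᵥ (R *ᵥ x) := _root_.dotProduct_comm _ _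
      simp only [hM_def, Matrix.sub_mulVec, Matrix.one_mulVec, Matrix.smul_mulVec,
        Matrix.add_mulVec, _root_.dotProduct_sub, _root_.dotProduct_smul,
        _root_.dotProduct_add, _root_.sub_dotProduct, hRtx, hRx, hcomm, smul_eq_mul]
      ring
    simp only [star_trivial]
    rw [key]
    have h6 : 0 ≤ (x - R *ᵥ x) ⬝ᵥ (x - R *ᵥ x) :=
      Finset.sum_nonneg fun i _ => mul_self_nonneg _
    exact mul_nonneg (by norm_num) h6
  -- trace identity : (A * (1 - R)).trace = (A * M).trace
  have htr : (A * (1 - R)).trace = (A * M).trace := by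
    have hARt : (A * Rᵀ).trace = (A * R).trace := by
      calc (A * Rᵀ).trace = (A * Rᵀ)ᵀ.trace := (Matrix.trace_transpose _).symm
        _ = (R * Aᵀ).trace := by rw [Matrix.transpose_mul, Matrix.transpose_transpose]
        _ = (R * A).trace := by rw [hAsymm]
        _ = (A * R).trace := Matrix.trace_mul_comm _ _
    simp only [hM_def, Matrix.mul_sub, Matrix.mul_one, Matrix.mul_smul, Matrix.mul_add,
      Matrix.trace_sub, Matrix.trace_smul, Matrix.trace_add, hARt, smul_eq_mul]
    ring
  -- √M A √M is PSD with the same trace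
  set S : Matrix (Fin 3) (Fin 3) ℝ := (by open scoped MatrixOrder in exact CFC.sqrt M) with hS_def
  have hSherm : Sᴴ = S := by open scoped MatrixOrder in exact (CFC.sqrt_nonneg M).posSemidef.1
  have hSt : Sᵀ = S := by
    rw [← Matrix.conjTranspose_eq_transpose_of_trivial, hSherm]
  have hSS : S * S = M := by open scoped MatrixOrder in exact CFC.sqrt_mul_sqrt_self M hMpsd.nonneg
  have hP : (S * A * S).PosSemidef := by
    have := hA.posSemidef.mul_mul_conjTranspose_same S
    rwa [hSherm] at this
  have htr2 : (A * M).trace = (S * A * S).trace := by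
    rw [← hSS, ← Matrix.mul_assoc, Matrix.trace_mul_comm (A * S) S, ← Matrix.mul_assoc]
  constructor
  · rw [htr, htr2]
    exact psd_trace_nonneg hP
  constructor
  · -- equality case
    intro h0
    have hP0 : S * A * S = 0 := psd_trace_eq_zero hP (by rw [← htr2, ← htr, h0])
    -- S = 0
    have hS0 : S = 0 := by
      ext i j
      have hcol : S *ᵥ Pi.single j 1 = 0 := by
        by_contra hne
        have hpos := hA.dotProduct_mulVec_pos hne
        have hz : (S *ᵥ Pi.single j 1) ⬝ᵥ (A *ᵥ (S *ᵥ Pi.single j 1)) = 0 := by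
          rw [_root_.dotProduct_comm, Matrix.dotProduct_mulVec, ← Matrix.mulVec_transpose,
            hSt, Matrix.mulVec_mulVec, Matrix.mulVec_mulVec, hP0,
            Matrix.zero_mulVec, _root_.zero_dotProduct]
        rw [star_trivial, hz] at hpos
        exact lt_irrefl 0 hpos
      have := congrFun hcol i
      simpa [Matrix.mulVec, dotProduct, Pi.single_apply] using this
    have hM0 : M = 0 := by rw [← hSS, hS0, Matrix.mul_zero]
    -- so Rᵀ = 2•1 - R
    have hRt : Rᵀ = (2:ℝ) • (1 : Matrix (Fin 3) (Fin 3) ℝ) - R := by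
      have h1 : (1 : Matrix (Fin 3) (Fin 3) ℝ) = (2:ℝ)⁻¹ • (R + Rᵀ) := by
        have := hM0
        rw [hM_def, sub_eq_zero] at this
        exact this
      have h2 : (2:ℝ) • (1 : Matrix (Fin 3) (Fin 3) ℝ) = R + Rᵀ := by
        rw [h1, smul_smul]
        norm_num
      rw [h2]
      abel
    -- N := R - 1 is antisymmetric with N² = 0
    set N : Matrix (Fin 3) (Fin 3) ℝ := R - 1 with hN_def
    have hNt : Nᵀ = -N := by
      rw [hN_def, Matrix.transpose_sub, Matrix.transpose_one, hRt, two_smul]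
      abel
    have hR2 : R * R = R + R - 1 := by
      have h3 : ((2:ℝ) • (1 : Matrix (Fin 3) (Fin 3) ℝ) - R) * R = 1 := by
        rw [← hRt]; exact hR
      have h4 : (2:ℝ) • R - R * R = 1 := by
        rw [← h3, Matrix.sub_mul, Matrix.smul_mul, Matrix.one_mul]
      have h5 : R * R = (2:ℝ) • R - 1 := by
        rw [← h4]; abel
      rw [h5, two_smul]
    have hNN : N * N = 0 := by
      have : N * N = R * R - R - R + 1 := by
        rw [hN_def, Matrix.sub_mul, Matrix.mul_sub, Matrix.mul_sub, Matrix.one_mul,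
          Matrix.mul_one, Matrix.mul_one]
        abel
      rw [this, hR2]
      abel
    have hNtN : Nᴴ * N = 0 := by
      rw [Matrix.conjTranspose_eq_transpose_of_trivial, hNt, Matrix.neg_mul, hNN, neg_zero]
    have hN0 : N = 0 := Matrix.conjTranspose_mul_self_eq_zero.mp hNtN
    rw [hN_def] at hN0
    exact sub_eq_zero.mp hN0
  · intro h
    rw [h]
    simp
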